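/- For every m and n ≥ ⌊m/2⌋ + m, there exist m strict preference lists over {1,…,n} such that the number of distinct image sets of Pareto efficient matchings is at least C(m, ⌈m/2⌉), which is Ω(2^m/√m). -/

import Mathlib

open Finset

/-- rank function: common top `k` items `0..k-1`, then agent `i`'s personal item `k+i`. -/
def prank {m n : ℕ} (k : ℕ) (i : Fin m) (j : Fin n) : ℕ :=
  if j.val < k then j.val else if j.val = k + i.val then k else j.val + 1

/-- matching where the agents in `T` (of size `k`) take the top items in order,
and everyone else takes their personal item. -/
def matchT {m n : ℕ} (k : ℕ) (hkn : k + m ≤ n) (T : Finset (Fin m)) (hT : T.card = k) :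
    Fin m → Fin n :=
  fun i => if h : i ∈ T then
      ⟨((T.orderIsoOfFin hT).symm ⟨i, h⟩ : Fin k).val, by
        have := ((T.orderIsoOfFin hT).symm ⟨i, h⟩).isLt; omega⟩
    else ⟨k + i.val, by have := i.isLt; omega⟩

lemma prank_inj {m n : ℕ} (k : ℕ) (i : Fin m) : Function.Injective (prank (n := n) k i) := by
  intro j1 j2 h
  unfold prank at h
  apply Fin.ext
  split_ifs at h <;> omega

lemma matchT_mem {m n : ℕ} (k : ℕ) (hkn : k + m ≤ n) (T : Finset (Fin m)) (hT : T.card = k)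
    {i : Fin m} (h : i ∈ T) :
    (matchT k hkn T hT i).val = ((T.orderIsoOfFin hT).symm ⟨i, h⟩ : Fin k).val := by
  simp [matchT, h]

lemma matchT_mem_lt {m n : ℕ} (k : ℕ) (hkn : k + m ≤ n) (T : Finset (Fin m)) (hT : T.card = k)
    {i : Fin m} (h : i ∈ T) : (matchT k hkn T hT i).val < k := by
  rw [matchT_mem k hkn T hT h]; exact Fin.is_lt _

lemma matchT_not_mem {m n : ℕ} (k : ℕ) (hkn : k + m ≤ n) (T : Finset (Fin m)) (hT : T.card = k)
    {i : Fin m} (h : i ∉ T) : (matchT k hkn T hT i).val = k + i.val := by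
  simp [matchT, h]

lemma matchT_inj {m n : ℕ} (k : ℕ) (hkn : k + m ≤ n) (T : Finset (Fin m)) (hT : T.card = k) :
    Function.Injective (matchT k hkn T hT) := by
  intro a b hab
  by_cases ha : a ∈ T <;> by_cases hb : b ∈ T
  · have h1 := matchT_mem k hkn T hT ha
    have h2 := matchT_mem k hkn T hT hb
    rw [hab] at h1
    have : ((T.orderIsoOfFin hT).symm ⟨a, ha⟩ : Fin k) = (T.orderIsoOfFin hT).symm ⟨b, hb⟩ :=
      Fin.ext (by omega)
    have := (T.orderIsoOfFin hT).symm.injective this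
    exact Subtype.ext_iff.mp this
  · have h1 := matchT_mem_lt k hkn T hT ha
    have h2 := matchT_not_mem k hkn T hT hb
    rw [hab] at h1; omega
  · have h1 := matchT_not_mem k hkn T hT ha
    have h2 := matchT_mem_lt k hkn T hT hb
    rw [← hab] at h2; omega
  · have h1 := matchT_not_mem k hkn T hT ha
    have h2 := matchT_not_mem k hkn T hT hb
    rw [hab] at h1
    apply Fin.ext; omega

lemma prank_matchT_not_mem {m n : ℕ} (k : ℕ) (hkn : k + m ≤ n) (T : Finset (Fin m))
    (hT : T.card = k) {i : Fin m} (h : i ∉ T) :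
    prank k i (matchT k hkn T hT i) = k := by
  have hv := matchT_not_mem k hkn T hT h
  unfold prank
  rw [hv, if_neg (by omega), if_pos rfl]

lemma card_B {n : ℕ} (k : ℕ) (hkn : k ≤ n) :
    ((Finset.univ : Finset (Fin n)).filter (fun j => j.val < k)).card = k := by
  rw [← Finset.card_range k]
  apply Finset.card_bij (fun j _ => j.val)
  · intro a ha; simp at ha ⊢; exact ha
  · intro a _ b _ h; exact Fin.ext h
  · intro b hb; simp at hb; exact ⟨⟨b, by omega⟩, by simp [hb], rfl⟩

lemma matchT_pareto {m n : ℕ} (k : ℕ) (hkn : k + m ≤ n) (T : Finset (Fin m)) (hT : T.card = k)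
    (σ : Fin m → Fin n) (hσ : Function.Injective σ)
    (hle : ∀ i, prank k i (σ i) ≤ prank k i (matchT k hkn T hT i)) :
    σ = matchT k hkn T hT := by
  set π := matchT k hkn T hT with hπ
  have h3 : ∀ i ∈ T, (σ i).val ≤ (π i).val ∧ (σ i).val < k := by
    intro i hi
    have hlt := matchT_mem_lt k hkn T hT hi
    rw [← hπ] at hlt
    have := hle i
    unfold prank at this
    split_ifs at this <;> omega
  have h4 : ∀ i ∉ T, (σ i).val < k ∨ (σ i).val = k + i.val := by
    intro i hi
    have hv := matchT_not_mem k hkn T hT hi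
    rw [← hπ] at hv
    have := hle i
    unfold prank at this
    split_ifs at this <;> omega
  set B := (Finset.univ : Finset (Fin n)).filter (fun j => j.val < k) with hBdef
  have hB : B.card = k := card_B k (by omega)
  set A := (Finset.univ : Finset (Fin m)).filter (fun i => (σ i).val < k) with hAdef
  have hTA : T ⊆ A := fun i hi => by simp [hAdef, (h3 i hi).2]
  have hAB : A.image σ ⊆ B := by
    intro j hj
    simp only [hAdef, Finset.mem_image, Finset.mem_filter] at hj
    obtain ⟨i, ⟨_, hi⟩, rfl⟩ := hj
    simp [hBdef, hi]
  have hAcard : A.card ≤ k := by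
    rw [← Finset.card_image_of_injective A hσ]
    exact hB ▸ Finset.card_le_card hAB
  have hAT : A = T := (Finset.eq_of_subset_of_card_le hTA (hT ▸ hAcard)).symm
  have hout : ∀ i ∉ T, σ i = π i := by
    intro i hi
    have h1 : ¬ (σ i).val < k := by
      intro h
      exact hi (hAT ▸ (by simp [hAdef, h] : i ∈ A))
    have h2 := (h4 i hi).resolve_left h1
    exact Fin.ext (by rw [h2, matchT_not_mem k hkn T hT hi])
  have himσ : T.image σ = B := by
    apply Finset.eq_of_subset_of_card_le
    · intro j hj
      simp only [Finset.mem_image] at hj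
      obtain ⟨i, hi, rfl⟩ := hj
      simp [hBdef, (h3 i hi).2]
    · rw [Finset.card_image_of_injective T hσ, hT, hB]
  have himπ : T.image π = B := by
    apply Finset.eq_of_subset_of_card_le
    · intro j hj
      simp only [Finset.mem_image] at hj
      obtain ⟨i, hi, rfl⟩ := hj
      simp [hBdef, matchT_mem_lt k hkn T hT hi]
      exact matchT_mem_lt k hkn T hT hi
    · rw [Finset.card_image_of_injective T (matchT_inj k hkn T hT), hT, hB]
  have hsum : ∑ i ∈ T, (σ i).val = ∑ i ∈ T, (π i).val := by
    have e1 : ∑ j ∈ T.image σ, j.val = ∑ i ∈ T, (σ i).val :=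
      Finset.sum_image (fun a _ b _ h => hσ h)
    have e2 : ∑ j ∈ T.image π, j.val = ∑ i ∈ T, (π i).val :=
      Finset.sum_image (fun a _ b _ h => matchT_inj k hkn T hT h)
    rw [← e1, ← e2, himσ, himπ]
  have hpt : ∀ i ∈ T, (σ i).val = (π i).val := by
    by_contra hcon
    push_neg at hcon
    obtain ⟨i0, hi0, hne⟩ := hcon
    have hlt : (σ i0).val < (π i0).val := lt_of_le_of_ne (h3 i0 hi0).1 hne
    have := Finset.sum_lt_sum (fun i hi => (h3 i hi).1) ⟨i0, hi0, hlt⟩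
    omega
  funext i
  by_cases hi : i ∈ T
  · exact Fin.ext (hpt i hi)
  · exact hout i hi

lemma matchT_image_inj {m n : ℕ} (k : ℕ) (hkn : k + m ≤ n) (T T' : Finset (Fin m))
    (hT : T.card = k) (hT' : T'.card = k)
    (h : Finset.univ.image (matchT k hkn T hT) = Finset.univ.image (matchT k hkn T' hT')) :
    T = T' := by
  have key : ∀ (U : Finset (Fin m)) (hU : U.card = k) (i : Fin m),
      i ∉ U ↔ (⟨k + i.val, by have := i.isLt; omega⟩ : Fin n) ∈
        Finset.univ.image (matchT k hkn U hU) := by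
    intro U hU i
    constructor
    · intro hi
      exact Finset.mem_image.mpr ⟨i, Finset.mem_univ i,
        Fin.ext (matchT_not_mem k hkn U hU hi)⟩
    · intro hmem
      obtain ⟨i', _, hi'⟩ := Finset.mem_image.mp hmem
      by_cases hU' : i' ∈ U
      · have h1 := matchT_mem_lt k hkn U hU hU'
        rw [hi'] at h1
        have h2 : k + i.val < k := h1
        omega
      · have hv := matchT_not_mem k hkn U hU hU'
        rw [hi'] at hv
        have h2 : k + i'.val = k + i.val := hv.symm
        have : i' = i := Fin.ext (by omega)
        exact this ▸ hU'
  ext i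
  have := (key T hT i).trans (h ▸ (key T' hT' i).symm)
  exact not_iff_not.mp this

/-- For every `m` and `n ≥ ⌊m/2⌋ + m` there are `m` strict preference lists over `n` items
for which the number of distinct image sets of Pareto efficient matchings is at least
`C(m, ⌈m/2⌉)`. -/
theorem stmt12 (m n : ℕ) (hn : m / 2 + m ≤ n) :
    ∃ rank : Fin m → Fin n → ℕ, (∀ i, Function.Injective (rank i)) ∧
      Nat.choose m ((m + 1) / 2) ≤
        Set.ncard {S : Finset (Fin n) | ∃ π : Fin m → Fin n, Function.Injective π ∧
          (¬ ∃ σ : Fin m → Fin n, Function.Injective σ ∧ σ ≠ π ∧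
            ∀ i, rank i (σ i) ≤ rank i (π i)) ∧
          S = Finset.univ.image π} := by
  classical
  set k := m / 2 with hk
  have hkn : k + m ≤ n := hn
  refine ⟨fun i => prank k i, fun i => prank_inj k i, ?_⟩
  have hchoose : Nat.choose m ((m + 1) / 2) = Nat.choose m k := by
    rcases Nat.eq_zero_or_pos m with rfl | hm
    · simp [hk]
    · have h1 : (m + 1) / 2 ≤ m := by omega
      have h2 : m - (m + 1) / 2 = k := by omega
      rw [← Nat.choose_symm h1, h2]
  rw [hchoose]
  set F : Finset (Fin m) → Finset (Fin n) := fun T =>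
    if h : T.card = k then Finset.univ.image (matchT k hkn T h) else ∅ with hF
  set P := Finset.powersetCard k (Finset.univ : Finset (Fin m)) with hP
  have hcardP : ∀ T ∈ P, T.card = k := by
    intro T hT
    exact (Finset.mem_powersetCard_univ).mp hT
  have hsub : ↑(P.image F) ⊆ {S : Finset (Fin n) | ∃ π : Fin m → Fin n,
      Function.Injective π ∧
      (¬ ∃ σ : Fin m → Fin n, Function.Injective σ ∧ σ ≠ π ∧
        ∀ i, prank k i (σ i) ≤ prank k i (π i)) ∧
      S = Finset.univ.image π} := by
    intro S hS
    simp only [Finset.coe_image, Set.mem_image, Finset.mem_coe] at hS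
    obtain ⟨T, hT, rfl⟩ := hS
    have hTk := hcardP T hT
    refine ⟨matchT k hkn T hTk, matchT_inj k hkn T hTk, ?_, ?_⟩
    · rintro ⟨σ, hσinj, hσne, hσle⟩
      exact hσne (matchT_pareto k hkn T hTk σ hσinj hσle)
    · simp [hF, hTk]
  have hinj : Set.InjOn F ↑P := by
    intro T hT T' hT' hFT
    have hTk := hcardP T hT
    have hTk' := hcardP T' hT'
    rw [hF] at hFT
    simp only [dif_pos hTk, dif_pos hTk'] at hFT
    exact matchT_image_inj k hkn T T' hTk hTk' hFT
  have hcard : (P.image F).card = Nat.choose m k := by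
    rw [Finset.card_image_of_injOn hinj, hP, Finset.card_powersetCard,
      Finset.card_univ, Fintype.card_fin]
  calc Nat.choose m k = (P.image F).card := hcard.symm
    _ = Set.ncard (↑(P.image F) : Set (Finset (Fin n))) := (Set.ncard_coe_finset _).symm
    _ ≤ _ := Set.ncard_le_ncard hsub (Set.toFinite _)
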